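/- Let S be a set of k nodes among N, fix I ⊆ S with |I| = m, and let C be a collection of k-subsets, each containing I, such that any two distinct members of C intersect exactly in I, and each member of C intersects S exactly in I. If edge weights are independent Gaussians (mean μ on edges inside S, mean 0 otherwise, variance σ²), then the random variables W_REM(Ŝ) = W(Ŝ) − W(I) for Ŝ ∈ C ∪ {S} are mutually independent, with W_REM(S) ~ N(ℓ_m μ, ℓ_m σ²) and W_REM(Ŝ) ~ N(0, ℓ_m σ²) for Ŝ ∈ C, where ℓ_m = C(k,2) − C(m,2). -/

import Mathlib

open Finset MeasureTheory ProbabilityTheory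

section AuxStmt13
open scoped NNReal ENNReal
open Real

lemma pdf_mul_pdf (m₁ m₂ x z : ℝ) {v₁ v₂ : ℝ≥0} (h₁ : v₁ ≠ 0) (h₂ : v₂ ≠ 0) :
    gaussianPDFReal m₁ v₁ x * gaussianPDFReal (x + m₂) v₂ z =
      gaussianPDFReal (m₁ + m₂) (v₁ + v₂) z *
        gaussianPDFReal (((v₂ : ℝ) * m₁ + (v₁ : ℝ) * (z - m₂)) / ((v₁ : ℝ) + v₂))
          (v₁ * v₂ / (v₁ + v₂)) x := by
  have ha : (0:ℝ) < v₁ := lt_of_le_of_ne (v₁.coe_nonneg) (by exact_mod_cast (Ne.symm h₁))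
  have hb : (0:ℝ) < v₂ := lt_of_le_of_ne (v₂.coe_nonneg) (by exact_mod_cast (Ne.symm h₂))
  have hab : (0:ℝ) < (v₁:ℝ) + v₂ := by linarith
  have hpi : (0:ℝ) < π := pi_pos
  simp only [gaussianPDFReal]
  have hc1 : ((v₁ + v₂ : ℝ≥0) : ℝ) = (v₁:ℝ) + v₂ := by push_cast; ring
  have hc2 : ((v₁ * v₂ / (v₁ + v₂) : ℝ≥0) : ℝ) = (v₁:ℝ) * v₂ / ((v₁:ℝ) + v₂) := by
    push_cast; ring
  rw [hc1, hc2]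
  have hconst : (√(2 * π * v₁))⁻¹ * (√(2 * π * v₂))⁻¹ =
      (√(2 * π * ((v₁:ℝ) + v₂)))⁻¹ * (√(2 * π * ((v₁:ℝ) * v₂ / ((v₁:ℝ) + v₂))))⁻¹ := by
    rw [← mul_inv, ← mul_inv, ← Real.sqrt_mul (by positivity), ← Real.sqrt_mul (by positivity)]
    congr 1
    field_simp
  have hexp : rexp (-(x - m₁) ^ 2 / (2 * v₁)) * rexp (-(z - (x + m₂)) ^ 2 / (2 * v₂)) =
      rexp (-(z - (m₁ + m₂)) ^ 2 / (2 * ((v₁:ℝ) + v₂))) *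
        rexp (-(x - ((v₂:ℝ) * m₁ + (v₁:ℝ) * (z - m₂)) / ((v₁:ℝ) + v₂)) ^ 2 /
          (2 * ((v₁:ℝ) * v₂ / ((v₁:ℝ) + v₂)))) := by
    rw [← Real.exp_add, ← Real.exp_add]
    congr 1
    field_simp
    ring
  calc (√(2 * π * v₁))⁻¹ * rexp (-(x - m₁) ^ 2 / (2 * v₁)) *
      ((√(2 * π * v₂))⁻¹ * rexp (-(z - (x + m₂)) ^ 2 / (2 * v₂)))
      = ((√(2 * π * v₁))⁻¹ * (√(2 * π * v₂))⁻¹) *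
        (rexp (-(x - m₁) ^ 2 / (2 * v₁)) * rexp (-(z - (x + m₂)) ^ 2 / (2 * v₂))) := by ring
    _ = _ := by rw [hconst, hexp]; ring

lemma gaussianReal_add_gaussianReal (m₁ m₂ : ℝ) (v₁ v₂ : ℝ≥0) :
    Measure.map (fun p : ℝ × ℝ => p.1 + p.2) ((gaussianReal m₁ v₁).prod (gaussianReal m₂ v₂)) =
      gaussianReal (m₁ + m₂) (v₁ + v₂) := by
  have hadd : Measurable (fun p : ℝ × ℝ => p.1 + p.2) := measurable_fst.add measurable_snd
  by_cases h₁ : v₁ = 0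
  · subst h₁
    rw [gaussianReal_zero_var m₁, Measure.dirac_prod, Measure.map_map hadd measurable_prodMk_left]
    have := gaussianReal_map_const_add (v := v₂) (μ := m₂) m₁
    rw [show ((fun p : ℝ × ℝ => p.1 + p.2) ∘ Prod.mk m₁) = (m₁ + ·) from rfl, this, zero_add,
      add_comm]
  by_cases h₂ : v₂ = 0
  · subst h₂
    rw [gaussianReal_zero_var m₂, Measure.prod_dirac, Measure.map_map hadd measurable_prodMk_right]
    have := gaussianReal_map_add_const (v := v₁) (μ := m₁) m₂
    rw [show ((fun p : ℝ × ℝ => p.1 + p.2) ∘ (fun x => (x, m₂))) = (· + m₂) from rfl, this,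
      add_zero]
  have h₁₂ : v₁ + v₂ ≠ 0 := by simp [h₁]
  have h₃ : v₁ * v₂ / (v₁ + v₂) ≠ 0 := by
    simp only [ne_eq, div_eq_zero_iff, mul_eq_zero, not_or]
    exact ⟨⟨h₁, h₂⟩, h₁₂⟩
  have hjoint : Measurable fun p : ℝ × ℝ => gaussianPDF (p.1 + m₂) v₂ p.2 := by
    unfold gaussianPDF gaussianPDFReal
    fun_prop
  ext s hs
  rw [Measure.map_apply hadd hs, Measure.prod_apply (hadd hs)]
  have step1 : ∀ x : ℝ, gaussianReal m₂ v₂ (Prod.mk x ⁻¹' ((fun p : ℝ × ℝ => p.1 + p.2) ⁻¹' s))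
      = ∫⁻ z in s, gaussianPDF (x + m₂) v₂ z := by
    intro x
    have hmap := gaussianReal_map_const_add (v := v₂) (μ := m₂) x
    have hpre : Prod.mk x ⁻¹' ((fun p : ℝ × ℝ => p.1 + p.2) ⁻¹' s) = (x + ·) ⁻¹' s := rfl
    rw [hpre, ← Measure.map_apply (measurable_const_add x) hs, hmap,
      gaussianReal_of_var_ne_zero _ h₂, withDensity_apply _ hs, add_comm m₂ x]
  simp_rw [step1]
  have hinner : Measurable fun x : ℝ => ∫⁻ z in s, gaussianPDF (x + m₂) v₂ z := by
    simp_rw [← lintegral_indicator hs]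
    apply Measurable.lintegral_prod_right (f := fun x z => s.indicator (gaussianPDF (x + m₂) v₂) z)
    have : (Function.uncurry fun x z => s.indicator (gaussianPDF (x + m₂) v₂) z) =
        (Prod.snd ⁻¹' s).indicator (fun p : ℝ × ℝ => gaussianPDF (p.1 + m₂) v₂ p.2) := by
      funext p
      by_cases hps : p.2 ∈ s <;> simp [Function.uncurry, Set.indicator_apply, hps]
    rw [this]
    exact hjoint.indicator (measurable_snd hs)
  rw [gaussianReal_of_var_ne_zero _ h₁,
    lintegral_withDensity_eq_lintegral_mul _ (measurable_gaussianPDF _ _) hinner]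
  simp only [Pi.mul_apply]
  have hmul : ∀ x : ℝ, gaussianPDF m₁ v₁ x * ∫⁻ z in s, gaussianPDF (x + m₂) v₂ z
      = ∫⁻ z in s, gaussianPDF m₁ v₁ x * gaussianPDF (x + m₂) v₂ z := by
    intro x
    rw [← lintegral_const_mul _ (measurable_gaussianPDF _ _)]
  simp_rw [hmul]
  rw [lintegral_lintegral_swap (by
    apply Measurable.aemeasurable
    exact ((measurable_gaussianPDF m₁ v₁).comp measurable_fst).mul hjoint)]
  have key : ∀ z : ℝ, ∫⁻ x, gaussianPDF m₁ v₁ x * gaussianPDF (x + m₂) v₂ z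
      = gaussianPDF (m₁ + m₂) (v₁ + v₂) z := by
    intro z
    have hpt : ∀ x : ℝ, gaussianPDF m₁ v₁ x * gaussianPDF (x + m₂) v₂ z =
        gaussianPDF (m₁ + m₂) (v₁ + v₂) z *
          gaussianPDF (((v₂ : ℝ) * m₁ + (v₁ : ℝ) * (z - m₂)) / ((v₁ : ℝ) + v₂))
            (v₁ * v₂ / (v₁ + v₂)) x := by
      intro x
      simp only [gaussianPDF]
      rw [← ENNReal.ofReal_mul (gaussianPDFReal_nonneg _ _ _),
        ← ENNReal.ofReal_mul (gaussianPDFReal_nonneg _ _ _), pdf_mul_pdf m₁ m₂ x z h₁ h₂]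
    simp_rw [hpt]
    rw [lintegral_const_mul _ (measurable_gaussianPDF _ _), lintegral_gaussianPDF_eq_one _ h₃,
      mul_one]
  simp_rw [key]
  rw [gaussianReal_of_var_ne_zero _ h₁₂, withDensity_apply _ hs]

lemma map_eval_pi_unique {ι : Type} [u : Unique ι] [f : Fintype ι] (ν : ι → Measure ℝ)
    [∀ i, SigmaFinite (ν i)] :
    Measure.map (fun g : ι → ℝ => g default) (Measure.pi ν) = ν default := by
  have hf : f = Unique.fintype := Subsingleton.elim _ _
  subst hf
  exact (measurePreserving_piUnique ν).map_eq

lemma sumdist_aux (n : ℕ) :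
    ∀ (ι : Type) (_ : Fintype ι) (_ : DecidableEq ι) (me : ι → ℝ) (v : ℝ≥0) (D : Finset ι),
      D.card = n →
      Measure.map (fun E : ι → ℝ => ∑ i ∈ D, E i)
          (Measure.pi fun i => gaussianReal (me i) v)
        = gaussianReal (∑ i ∈ D, me i) ((D.card : ℝ≥0) * v) := by
  induction n with
  | zero =>
    intro ι _ _ me v D hD
    rw [Finset.card_eq_zero] at hD
    subst hD
    simp only [Finset.sum_empty, Finset.card_empty, Nat.cast_zero, zero_mul]
    rw [gaussianReal_zero_var]
    have : IsProbabilityMeasure (Measure.pi fun i : ι => gaussianReal (me i) v) := inferInstance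
    rw [Measure.map_const, measure_univ, one_smul]
  | succ n ih =>
    intro ι _ _ me v D hD
    have hne : D.Nonempty := Finset.card_pos.mp (by omega)
    obtain ⟨i₀, hi₀⟩ := hne
    classical
    let p : ι → Prop := fun i => i = i₀
    let e : (ι → ℝ) ≃ᵐ ({i // p i} → ℝ) × ({i // ¬ p i} → ℝ) :=
      MeasurableEquiv.piEquivPiSubtypeProd (fun _ : ι => ℝ) p
    have hMP := measurePreserving_piEquivPiSubtypeProd
      (fun i : ι => gaussianReal (me i) v) p
    let D' : Finset {i // ¬ p i} := (D.erase i₀).subtype (fun i => ¬ p i)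
    have hD' : D' = (D.erase i₀).subtype (fun i => ¬ p i) := rfl
    have hcard' : D'.card = n := by
      rw [hD', Finset.card_subtype, Finset.filter_true_of_mem
        (fun x hx => Finset.ne_of_mem_erase hx), Finset.card_erase_of_mem hi₀, hD]
      omega
    -- the function as a composition through e
    have hfun : (fun E : ι → ℝ => ∑ i ∈ D, E i) =
        (fun q : ({i // p i} → ℝ) × ({i // ¬ p i} → ℝ) =>
          q.1 default + ∑ i ∈ D', q.2 i) ∘ e := by
      funext E
      simp only [Function.comp_apply, e, MeasurableEquiv.piEquivPiSubtypeProd,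
        MeasurableEquiv.coe_mk, Equiv.piEquivPiSubtypeProd_apply]
      have h1 : (E (↑(default : {i // p i})) : ℝ) = E i₀ := rfl
      rw [h1, hD', Finset.sum_subtype_eq_sum_filter, Finset.filter_true_of_mem
        (fun x hx => Finset.ne_of_mem_erase hx : ∀ x ∈ D.erase i₀, ¬ p x),
        Finset.add_sum_erase _ _ hi₀]
    rw [hfun, ← Measure.map_map (by
        apply Measurable.add
        · exact (measurable_pi_apply _).comp measurable_fst
        · exact (Finset.measurable_sum _ (fun i _ => (measurable_pi_apply _).comp
            measurable_snd))) e.measurable, hMP.map_eq]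
    have hsplit : (fun q : ({i // p i} → ℝ) × ({i // ¬ p i} → ℝ) =>
        q.1 default + ∑ i ∈ D', q.2 i) = (fun q : ℝ × ℝ => q.1 + q.2) ∘
        (Prod.map (fun f : {i // p i} → ℝ => f default)
          (fun g : {i // ¬ p i} → ℝ => ∑ i ∈ D', g i)) := rfl
    have hsum : Measurable (fun g : {i // ¬ p i} → ℝ => ∑ i ∈ D', g i) :=
      Finset.measurable_sum _ (fun i _ => measurable_pi_apply _)
    have hev : Measurable (fun f : {i // p i} → ℝ => f default) := measurable_pi_apply _
    rw [hsplit, ← Measure.map_map (g := fun q : ℝ × ℝ => q.1 + q.2) (measurable_fst.add measurable_snd) (hev.prodMap hsum),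
      ← Measure.map_prod_map _ _ hev hsum]
    have hsndmap := ih {i // ¬ p i} inferInstance inferInstance (fun i => me ↑i) v D' hcard'
    rw [hsndmap, hcard',
      @map_eval_pi_unique {i // p i} _ (Subtype.fintype p) (fun i => gaussianReal (me ↑i) v) _,
      gaussianReal_add_gaussianReal]
    congr 1
    · show me i₀ + ∑ i ∈ D', me ↑i = ∑ i ∈ D, me i
      rw [hD', Finset.sum_subtype_eq_sum_filter, Finset.filter_true_of_mem
        (fun x hx => Finset.ne_of_mem_erase hx : ∀ x ∈ D.erase i₀, ¬ p x),
        Finset.add_sum_erase _ _ hi₀]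
    · rw [hD]
      push_cast
      ring

lemma pi_split {ι : Type} [Fintype ι] (ν : ι → Measure ℝ) [∀ i, IsProbabilityMeasure (ν i)]
    (p : ι → Prop) [DecidablePred p] {T₁ : Set ({i // p i} → ℝ)} {T₂ : Set ({i // ¬ p i} → ℝ)}
    (h₁ : MeasurableSet T₁) (h₂ : MeasurableSet T₂) :
    Measure.pi ν ((fun (E : ι → ℝ) (i : {i // p i}) => E ↑i) ⁻¹' T₁ ∩
        (fun (E : ι → ℝ) (i : {i // ¬ p i}) => E ↑i) ⁻¹' T₂)
      = Measure.pi (fun i : {i // p i} => ν ↑i) T₁ *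
        Measure.pi (fun i : {i // ¬ p i} => ν ↑i) T₂ := by
  have hMP := measurePreserving_piEquivPiSubtypeProd ν p
  have hset : (fun (E : ι → ℝ) (i : {i // p i}) => E ↑i) ⁻¹' T₁ ∩
      (fun (E : ι → ℝ) (i : {i // ¬ p i}) => E ↑i) ⁻¹' T₂
      = (MeasurableEquiv.piEquivPiSubtypeProd (fun _ : ι => ℝ) p) ⁻¹' (T₁ ×ˢ T₂) := rfl
  rw [hset, ← Measure.map_apply (MeasurableEquiv.piEquivPiSubtypeProd (fun _ : ι => ℝ) p).measurable
    (h₁.prod h₂), hMP.map_eq, Measure.prod_prod]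

lemma pi_marginal_left {ι : Type} [Fintype ι] (ν : ι → Measure ℝ)
    [∀ i, IsProbabilityMeasure (ν i)] (p : ι → Prop) [DecidablePred p]
    {T₁ : Set ({i // p i} → ℝ)} (h₁ : MeasurableSet T₁) :
    Measure.pi ν ((fun (E : ι → ℝ) (i : {i // p i}) => E ↑i) ⁻¹' T₁)
      = Measure.pi (fun i : {i // p i} => ν ↑i) T₁ := by
  have := pi_split ν p h₁ (MeasurableSet.univ (α := {i // ¬ p i} → ℝ))
  simpa using this

lemma pi_marginal_right {ι : Type} [Fintype ι] (ν : ι → Measure ℝ)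
    [∀ i, IsProbabilityMeasure (ν i)] (p : ι → Prop) [DecidablePred p]
    {T₂ : Set ({i // ¬ p i} → ℝ)} (h₂ : MeasurableSet T₂) :
    Measure.pi ν ((fun (E : ι → ℝ) (i : {i // ¬ p i}) => E ↑i) ⁻¹' T₂)
      = Measure.pi (fun i : {i // ¬ p i} => ν ↑i) T₂ := by
  have := pi_split ν p (MeasurableSet.univ (α := {i // p i} → ℝ)) h₂
  simpa using this

lemma sum_through_subtype {ι : Type} [DecidableEq ι] (q : ι → Prop) [DecidablePred q]
    (G : Finset ι) (hG : ∀ i ∈ G, q i) (E : ι → ℝ) :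
    ∑ i ∈ G, E i = ∑ i ∈ G.subtype q, E ↑i := by
  rw [Finset.sum_subtype_eq_sum_filter, Finset.filter_true_of_mem hG]

lemma pi_blocks_inter (n : ℕ) :
    ∀ (ι : Type) (_ : Fintype ι) (_ : DecidableEq ι) (ν : ι → Measure ℝ)
      (_ : ∀ i, IsProbabilityMeasure (ν i)) (κ : Type) (D : κ → Finset ι)
      (S : Finset κ), S.card = n →
      (∀ j ∈ S, ∀ j' ∈ S, j ≠ j' → Disjoint (D j) (D j')) →
      ∀ (B : κ → Set ℝ), (∀ j ∈ S, MeasurableSet (B j)) →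
      Measure.pi ν (⋂ j ∈ S, (fun E : ι → ℝ => ∑ i ∈ D j, E i) ⁻¹' B j)
        = ∏ j ∈ S, Measure.pi ν ((fun E : ι → ℝ => ∑ i ∈ D j, E i) ⁻¹' B j) := by
  induction n with
  | zero =>
    intro ι _ _ ν _ κ D S hS hdisj B hB
    rw [Finset.card_eq_zero] at hS
    subst hS
    simp
  | succ n ih =>
    intro ι _ _ ν _ κ D S hS hdisj B hB
    classical
    obtain ⟨j₀, S', hj₀S', hins, hS'⟩ := Finset.card_eq_succ.mp hS
    subst hins
    let p : ι → Prop := fun i => i ∈ D j₀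
    -- measurable sum functionals on subtypes
    have hmsum : ∀ (σ : Type) (_ : MeasurableSpace σ) (G : Finset σ), True := fun _ _ _ => trivial
    have hsum_meas : ∀ {σ : Type} (G : Finset σ),
        Measurable (fun F : σ → ℝ => ∑ i ∈ G, F i) :=
      fun G => Finset.measurable_sum _ (fun i _ => measurable_pi_apply _)
    -- rewrite the j₀ event
    have hev₀ : (fun E : ι → ℝ => ∑ i ∈ D j₀, E i) ⁻¹' B j₀
        = (fun (E : ι → ℝ) (i : {i // p i}) => E ↑i) ⁻¹'
          ((fun F : {i // p i} → ℝ => ∑ i ∈ (D j₀).subtype p, F i) ⁻¹' B j₀) := by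
      ext E
      simp only [Set.mem_preimage]
      rw [sum_through_subtype p (D j₀) (fun i hi => hi)]
    -- rewrite the other events
    have hev : ∀ j ∈ S', (fun E : ι → ℝ => ∑ i ∈ D j, E i) ⁻¹' B j
        = (fun (E : ι → ℝ) (i : {i // ¬ p i}) => E ↑i) ⁻¹'
          ((fun F : {i // ¬ p i} → ℝ => ∑ i ∈ (D j).subtype (fun i => ¬ p i), F i) ⁻¹' B j) := by
      intro j hj
      ext E
      simp only [Set.mem_preimage]
      have hsub : ∀ i ∈ D j, ¬ p i := by
        intro i hi hpi
        have hne : j₀ ≠ j := fun h => hj₀S' (h ▸ hj)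
        exact (Finset.disjoint_left.mp (hdisj j₀ (Finset.mem_insert_self _ _) j
          (Finset.mem_insert_of_mem hj) hne)) hpi hi
      rw [sum_through_subtype (fun i => ¬ p i) (D j) hsub]
    rw [Finset.set_biInter_insert, Finset.prod_insert hj₀S', hev₀]
    have hrest : (⋂ j ∈ S', (fun E : ι → ℝ => ∑ i ∈ D j, E i) ⁻¹' B j)
        = (fun (E : ι → ℝ) (i : {i // ¬ p i}) => E ↑i) ⁻¹'
          (⋂ j ∈ S', ((fun F : {i // ¬ p i} → ℝ =>
            ∑ i ∈ (D j).subtype (fun i => ¬ p i), F i) ⁻¹' B j)) := by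
      rw [Set.preimage_iInter₂]
      exact Set.iInter₂_congr hev
    rw [hrest]
    have hT₁ : MeasurableSet ((fun F : {i // p i} → ℝ =>
        ∑ i ∈ (D j₀).subtype p, F i) ⁻¹' B j₀) :=
      hsum_meas _ (hB j₀ (Finset.mem_insert_self _ _))
    have hT₂ : MeasurableSet (⋂ j ∈ S', ((fun F : {i // ¬ p i} → ℝ =>
        ∑ i ∈ (D j).subtype (fun i => ¬ p i), F i) ⁻¹' B j)) := by
      apply MeasurableSet.biInter (S'.countable_toSet)
      intro j hj
      exact hsum_meas _ (hB j (Finset.mem_insert_of_mem hj))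
    rw [pi_split ν p hT₁ hT₂, pi_marginal_left ν p hT₁]
    congr 1
    rw [ih {i // ¬ p i} inferInstance inferInstance (fun i => ν ↑i) inferInstance κ
      (fun j => (D j).subtype (fun i => ¬ p i)) S' hS'
      (fun j hj j' hj' hne => by
        rw [Finset.disjoint_left]
        rintro ⟨i, hi⟩ h1 h2
        simp only [Finset.mem_subtype] at h1 h2
        exact (Finset.disjoint_left.mp (hdisj j (Finset.mem_insert_of_mem hj) j'
          (Finset.mem_insert_of_mem hj') hne)) h1 h2)
      B (fun j hj => hB j (Finset.mem_insert_of_mem hj))]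
    apply Finset.prod_congr rfl
    intro j hj
    rw [hev j hj, pi_marginal_right ν p (hsum_meas _ (hB j (Finset.mem_insert_of_mem hj)))]

lemma iIndepFun_sum_blocks {ι κ : Type} [Fintype ι] [DecidableEq ι] (ν : ι → Measure ℝ)
    [∀ i, IsProbabilityMeasure (ν i)] (D : κ → Finset ι)
    (hD : ∀ j j', j ≠ j' → Disjoint (D j) (D j')) :
    iIndepFun
      (fun j (E : ι → ℝ) => ∑ i ∈ D j, E i) (Measure.pi ν) := by
  rw [iIndepFun_iff_measure_inter_preimage_eq_mul]
  intro s sets H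
  exact pi_blocks_inter s.card ι inferInstance inferInstance ν inferInstance κ D s rfl
    (fun j _ j' _ h => hD j j' h) sets H

end AuxStmt13

/-- Weight of a node set `A`: sum of the weights of all edges (2-subsets) inside `A`. -/
noncomputable def Wgraph {N : ℕ} (E : Finset (Fin N) → ℝ) (A : Finset (Fin N)) : ℝ :=
  ∑ e ∈ A.powersetCard 2, E e

/-- The 2-WSBM edge-weight distribution: all edge weights independent Gaussians
with variance `v`, mean `μ` on edges (2-subsets) inside `S` and mean `0` otherwise. -/
noncomputable def wsbmMeasure (μ : ℝ) (v : NNReal) {N : ℕ} (S : Finset (Fin N)) :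
    Measure (Finset (Fin N) → ℝ) :=
  Measure.pi fun e : Finset (Fin N) =>
    ProbabilityTheory.gaussianReal (if e.card = 2 ∧ e ⊆ S then μ else 0) v


section Wrem
open scoped NNReal ENNReal
open Real

lemma wrem_eq_sum {N : ℕ} {A I : Finset (Fin N)} (hIA : I ⊆ A) :
    (fun E : Finset (Fin N) → ℝ => Wgraph E A - Wgraph E I)
      = fun E => ∑ e ∈ A.powersetCard 2 \ I.powersetCard 2, E e := by
  funext E
  have hsub : I.powersetCard 2 ⊆ A.powersetCard 2 := Finset.powersetCard_mono hIA
  rw [Wgraph, Wgraph, ← Finset.sum_sdiff hsub, add_sub_cancel_right]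

lemma wrem_card {N : ℕ} {A I : Finset (Fin N)} (hIA : I ⊆ A) :
    (A.powersetCard 2 \ I.powersetCard 2).card = A.card.choose 2 - I.card.choose 2 := by
  rw [Finset.card_sdiff_of_subset (Finset.powersetCard_mono hIA), Finset.card_powersetCard,
    Finset.card_powersetCard]

lemma wrem_disjoint {N : ℕ} {A B I : Finset (Fin N)} (hAB : A ∩ B = I) :
    Disjoint (A.powersetCard 2 \ I.powersetCard 2) (B.powersetCard 2 \ I.powersetCard 2) := by
  rw [Finset.disjoint_left]
  intro e he he'
  rw [Finset.mem_sdiff, Finset.mem_powersetCard] at he he'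
  exact he.2 (Finset.mem_powersetCard.mpr ⟨hAB ▸ Finset.subset_inter he.1.1 he'.1.1, he.1.2⟩)

end Wrem

/-- if the `k`-sets in `C ∪ {S}` all contain `I` (of size `m`), pairwise
intersect exactly in `I`, and each member of `C` intersects `S` exactly in `I`, then
the variables `W_REM(Ŝ) = W(Ŝ) − W(I)`, `Ŝ ∈ C ∪ {S}`, are mutually independent, with
`W_REM(S) ~ N(ℓ_m μ, ℓ_m σ²)` and `W_REM(Ŝ) ~ N(0, ℓ_m σ²)` for `Ŝ ∈ C`,
where `ℓ_m = C(k,2) − C(m,2)`. -/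
theorem stmt13 (μ : ℝ) (v : NNReal) (hμ : 0 < μ) (hv : v ≠ 0) (N k m : ℕ)
    (S I : Finset (Fin N)) (hS : S.card = k) (hIS : I ⊆ S) (hI : I.card = m)
    (C : Finset (Finset (Fin N))) (hSC : S ∉ C)
    (hmem : ∀ A ∈ C, A.card = k ∧ I ⊆ A ∧ A ∩ S = I)
    (hpair : ∀ A ∈ C, ∀ B ∈ C, A ≠ B → A ∩ B = I) :
    (ProbabilityTheory.iIndepFun
        (fun A : ↑(insert S C) => fun E => Wgraph E (A : Finset (Fin N)) - Wgraph E I)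
        (wsbmMeasure μ v S)) ∧
      (Measure.map (fun E => Wgraph E S - Wgraph E I) (wsbmMeasure μ v S) =
        ProbabilityTheory.gaussianReal ((k.choose 2 - m.choose 2 : ℕ) * μ)
          ((k.choose 2 - m.choose 2 : ℕ) * v)) ∧
      (∀ A ∈ C, Measure.map (fun E => Wgraph E A - Wgraph E I) (wsbmMeasure μ v S) =
        ProbabilityTheory.gaussianReal 0 ((k.choose 2 - m.choose 2 : ℕ) * v)) := by
  have hinter : ∀ A ∈ insert S C, ∀ B ∈ insert S C, A ≠ B → A ∩ B = I := by
    intro A hA B hB hAB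
    rcases Finset.mem_insert.mp hA with hA' | hA'
    · rcases Finset.mem_insert.mp hB with hB' | hB'
      · exact absurd (hA'.trans hB'.symm) hAB
      · subst hA'
        rw [Finset.inter_comm]
        exact (hmem B hB').2.2
    · rcases Finset.mem_insert.mp hB with hB' | hB'
      · subst hB'
        exact (hmem A hA').2.2
      · exact hpair A hA' B hB' hAB
  have hIA : ∀ A ∈ insert S C, I ⊆ A := by
    intro A hA
    rcases Finset.mem_insert.mp hA with rfl | hA
    · exact hIS
    · exact (hmem A hA).2.1
  have hwsbm : wsbmMeasure μ v S = Measure.pi fun e : Finset (Fin N) =>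
      gaussianReal (if e.card = 2 ∧ e ⊆ S then μ else 0) v := rfl
  refine ⟨?_, ?_, ?_⟩
  · have h1 := iIndepFun_sum_blocks (κ := ↑(insert S C))
      (fun e : Finset (Fin N) => gaussianReal (if e.card = 2 ∧ e ⊆ S then μ else 0) v)
      (fun A => (A : Finset (Fin N)).powersetCard 2 \ I.powersetCard 2)
      (fun j j' hne => wrem_disjoint (hinter ↑j j.2 ↑j' j'.2 (fun h => hne (Subtype.ext h))))
    have hfe : (fun A : ↑(insert S C) => fun E => Wgraph E (A : Finset (Fin N)) - Wgraph E I)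
        = fun (A : ↑(insert S C)) (E : Finset (Fin N) → ℝ) =>
            ∑ e ∈ (A : Finset (Fin N)).powersetCard 2 \ I.powersetCard 2, E e :=
      funext fun A => wrem_eq_sum (hIA ↑A A.2)
    rw [hfe, hwsbm]
    exact h1
  · have hc : (S.powersetCard 2 \ I.powersetCard 2).card = k.choose 2 - m.choose 2 := by
      rw [wrem_card hIS, hS, hI]
    have h2 := sumdist_aux (S.powersetCard 2 \ I.powersetCard 2).card (Finset (Fin N))
      inferInstance inferInstance (fun e => if e.card = 2 ∧ e ⊆ S then μ else 0) v
      (S.powersetCard 2 \ I.powersetCard 2) rfl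
    rw [wrem_eq_sum hIS, hwsbm, h2]
    congr 1
    · have hsum : ∑ e ∈ S.powersetCard 2 \ I.powersetCard 2,
          (if e.card = 2 ∧ e ⊆ S then μ else 0) = ∑ _e ∈ S.powersetCard 2 \ I.powersetCard 2, μ :=
        Finset.sum_congr rfl (fun e he => by
          rw [Finset.mem_sdiff, Finset.mem_powersetCard] at he
          exact if_pos ⟨he.1.2, he.1.1⟩)
      rw [hsum, Finset.sum_const, hc, nsmul_eq_mul]
    · rw [hc]
  · intro A hA
    have hIA' : I ⊆ A := (hmem A hA).2.1
    have hc : (A.powersetCard 2 \ I.powersetCard 2).card = k.choose 2 - m.choose 2 := by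
      rw [wrem_card hIA', (hmem A hA).1, hI]
    have h2 := sumdist_aux (A.powersetCard 2 \ I.powersetCard 2).card (Finset (Fin N))
      inferInstance inferInstance (fun e => if e.card = 2 ∧ e ⊆ S then μ else 0) v
      (A.powersetCard 2 \ I.powersetCard 2) rfl
    rw [wrem_eq_sum hIA', hwsbm, h2]
    congr 1
    · apply Finset.sum_eq_zero
      intro e he
      rw [Finset.mem_sdiff, Finset.mem_powersetCard] at he
      apply if_neg
      rintro ⟨hcard, hsub⟩
      exact he.2 (Finset.mem_powersetCard.mpr
        ⟨(hmem A hA).2.2 ▸ Finset.subset_inter he.1.1 hsub, he.1.2⟩)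
    · rw [hc]
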